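/- arXiv:2104.12011 — 5 statements merged into one kernel-verified Lean document; each statement's English description precedes it below -/
import Mathlib

section
/- Let (X, μ) be a measure space and let T be a countable collection of measurable subsets of X of finite positive measure. Define the fractional maximal operator M_{T,α} f(z) = sup over sets S in T containing z of μ(S)^α · (1/μ(S)) ∫_S |f| dμ. Suppose 0 < α < 1 and 1 < p < q < ∞ satisfy 1/p − 1/q = α, and suppose that for every t > 0 the superlevel set {M_{T,α} f > t} can be covered by a pairwise disjoint subfamily T_t ⊆ T of sets S each satisfying μ(S)^α · (1/μ(S)) ∫_S |f| dμ > t. Then M_{T,α} maps L^p(μ) boundedly into weak L^q(μ): for all t > 0, t^q · μ({z : M_{T,α} f(z) > t}) ≤ ‖f‖_{L^p}^q. -/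
open MeasureTheory ENNReal

lemma tsum_rpow_le_rpow_tsum' {ι : Type*} (g : ι → ℝ≥0∞) {r : ℝ} (hr : 1 ≤ r) :
    ∑' i, g i ^ r ≤ (∑' i, g i) ^ r := by
  have hr0 : 0 < r := lt_of_lt_of_le one_pos hr
  set S := ∑' i, g i with hS
  rcases eq_or_ne S ∞ with hStop | hStop
  · rw [hStop, ENNReal.top_rpow_of_pos hr0]; exact le_top
  rcases eq_or_ne S 0 with hS0 | hS0
  · have : ∀ i, g i = 0 := fun i => by
      have := ENNReal.le_tsum (f := g) i
      rw [← hS, hS0] at this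
      exact le_antisymm this zero_le
    simp [this, ENNReal.zero_rpow_of_pos hr0]
  have hstep : ∀ i, g i ^ r ≤ g i * S ^ (r - 1) := by
    intro i
    have hgi : g i ≤ S := ENNReal.le_tsum i
    rcases eq_or_ne (g i) 0 with h0 | h0
    · simp [h0, ENNReal.zero_rpow_of_pos hr0]
    · have hgt : g i ≠ ∞ := fun h => hStop (top_le_iff.mp (h ▸ hgi))
      calc g i ^ r = g i ^ (1 + (r - 1)) := by ring_nf
        _ = g i ^ (1 : ℝ) * g i ^ (r - 1) := ENNReal.rpow_add _ _ h0 hgt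
        _ ≤ g i * S ^ (r - 1) := by
            rw [ENNReal.rpow_one]
            exact mul_le_mul_right (ENNReal.rpow_le_rpow hgi (by linarith)) _
  calc ∑' i, g i ^ r ≤ ∑' i, g i * S ^ (r - 1) := ENNReal.tsum_le_tsum hstep
    _ = S * S ^ (r - 1) := by rw [ENNReal.tsum_mul_right]
    _ = S ^ (1 : ℝ) * S ^ (r - 1) := by rw [ENNReal.rpow_one]
    _ = S ^ r := by rw [← ENNReal.rpow_add _ _ hS0 hStop]; ring_nf

/-- Weak (p,q) bound for the fractional maximal operator associated to a
countable basis `T`, given a covering property of superlevel sets by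
disjoint subfamilies. -/
theorem fractional_maximal_weak_type {X : Type*} [MeasurableSpace X] (μ : Measure X)
    (T : ℕ → Set X) (hTm : ∀ j, MeasurableSet (T j))
    (hTpos : ∀ j, 0 < μ (T j)) (hTfin : ∀ j, μ (T j) < ∞)
    (α p q : ℝ) (hα0 : 0 < α) (hα1 : α < 1)
    (hp : 1 < p) (hpq : p < q) (hpqα : 1 / p - 1 / q = α)
    (f : X → ℝ≥0∞) (hf : Measurable f)
    (M : X → ℝ≥0∞)
    (hM : ∀ z, M z = ⨆ j, (T j).indicator
      (fun _ => μ (T j) ^ α * (μ (T j))⁻¹ * ∫⁻ x in T j, f x ∂μ) z)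
    (hcover : ∀ t : ℝ≥0∞, 0 < t → ∃ Tt : Set ℕ,
      ({z | t < M z} ⊆ ⋃ j ∈ Tt, T j) ∧
      (Tt.Pairwise fun i j => Disjoint (T i) (T j)) ∧
      (∀ j ∈ Tt, t < μ (T j) ^ α * (μ (T j))⁻¹ * ∫⁻ x in T j, f x ∂μ)) :
    ∀ t : ℝ≥0∞, 0 < t →
      t ^ q * μ {z | t < M z} ≤ (∫⁻ x, f x ^ p ∂μ) ^ (q / p) := by
  intro t ht
  have hp0 : 0 < p := lt_trans one_pos hp
  have hq0 : 0 < q := lt_trans hp0 hpq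
  have hq1 : 0 < 1 / q := by positivity
  rcases eq_or_ne t ∞ with rfl | htop
  · have hempty : {z | (⊤ : ℝ≥0∞) < M z} = ∅ := by
      ext z; simp [not_top_lt]
    rw [hempty]
    simp
  obtain ⟨Tt, hsub, hdisj, hbig⟩ := hcover t ht
  have hTtc : Tt.Countable := Set.to_countable Tt
  set p' := Real.conjExponent p with hp'def
  have hconj : p.HolderConjugate p' := Real.HolderConjugate.conjExponent hp
  -- key per-set estimate
  have key : ∀ j ∈ Tt, t ^ q * μ (T j) ≤ (∫⁻ x in T j, f x ^ p ∂μ) ^ (q / p) := by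
    intro j hj
    have hμ0 : μ (T j) ≠ 0 := (hTpos j).ne'
    have hμt : μ (T j) ≠ ∞ := (hTfin j).ne
    set A := ∫⁻ x in T j, f x ^ p ∂μ with hA
    have holder : (∫⁻ x in T j, f x ∂μ) ≤ A ^ (1 / p) * μ (T j) ^ (1 / p') := by
      have h := ENNReal.lintegral_mul_le_Lp_mul_Lq (μ.restrict (T j)) hconj
        hf.aemeasurable (aemeasurable_const (b := (1 : ℝ≥0∞)))
      simpa using h
    -- exponent arithmetic : α - 1 + 1/p' = - (1/q)
    have hexp : α - 1 + 1 / p' = -(1 / q) := by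
      have h1 : 1 / p + 1 / p' = 1 := by
        simpa [one_div] using hconj.inv_add_inv_eq_one
      linarith
    have hchain : t ≤ μ (T j) ^ (-(1 / q)) * A ^ (1 / p) := by
      have h1 := (hbig j hj).le
      have h2 : μ (T j) ^ α * (μ (T j))⁻¹ * (∫⁻ x in T j, f x ∂μ)
          ≤ μ (T j) ^ α * (μ (T j))⁻¹ * (A ^ (1 / p) * μ (T j) ^ (1 / p')) :=
        mul_le_mul_right holder _
      have h3 : μ (T j) ^ α * (μ (T j))⁻¹ * (A ^ (1 / p) * μ (T j) ^ (1 / p'))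
          = μ (T j) ^ (-(1 / q)) * A ^ (1 / p) := by
        rw [← ENNReal.rpow_neg_one (μ (T j))]
        rw [show μ (T j) ^ α * μ (T j) ^ (-1 : ℝ) * (A ^ (1 / p) * μ (T j) ^ (1 / p'))
            = μ (T j) ^ α * μ (T j) ^ (-1 : ℝ) * μ (T j) ^ (1 / p') * A ^ (1 / p) by ring]
        rw [← ENNReal.rpow_add _ _ hμ0 hμt, ← ENNReal.rpow_add _ _ hμ0 hμt,
          show α + -1 + 1 / p' = -(1 / q) by linarith]
      calc t ≤ μ (T j) ^ α * (μ (T j))⁻¹ * (∫⁻ x in T j, f x ∂μ) := h1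
        _ ≤ μ (T j) ^ α * (μ (T j))⁻¹ * (A ^ (1 / p) * μ (T j) ^ (1 / p')) := h2
        _ = μ (T j) ^ (-(1 / q)) * A ^ (1 / p) := h3
    have hpow : t ^ q ≤ μ (T j) ^ (-(1 : ℝ)) * A ^ (q / p) := by
      have := ENNReal.rpow_le_rpow hchain hq0.le
      rw [ENNReal.mul_rpow_of_nonneg _ _ hq0.le, ← ENNReal.rpow_mul, ← ENNReal.rpow_mul] at this
      have e1 : -(1 / q) * q = -(1 : ℝ) := by field_simp
      have e2 : 1 / p * q = q / p := by field_simp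
      rwa [e1, e2] at this
    calc t ^ q * μ (T j) ≤ μ (T j) ^ (-(1 : ℝ)) * A ^ (q / p) * μ (T j) :=
          mul_le_mul_left hpow _
      _ = (μ (T j) ^ (-(1 : ℝ)) * μ (T j) ^ (1 : ℝ)) * A ^ (q / p) := by
          rw [ENNReal.rpow_one]; ring
      _ = A ^ (q / p) := by
          rw [← ENNReal.rpow_add _ _ hμ0 hμt]
          norm_num
  -- sum up
  have hμle : μ {z | t < M z} ≤ ∑' j : Tt, μ (T j) := by
    calc μ {z | t < M z} ≤ μ (⋃ j ∈ Tt, T j) := measure_mono hsub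
      _ ≤ ∑' j : Tt, μ (T j) := by
          rw [Set.biUnion_eq_iUnion]
          exact measure_iUnion_le _
  have hsum1 : ∑' j : Tt, (∫⁻ x in T (j : ℕ), f x ^ p ∂μ) ≤ ∫⁻ x, f x ^ p ∂μ := by
    have hdisj' : Pairwise (Function.onFun Disjoint fun j : Tt => T (j : ℕ)) := by
      intro i j hij
      exact hdisj i.2 j.2 (fun h => hij (Subtype.ext h))
    rw [← lintegral_iUnion (fun j : Tt => hTm j) hdisj']
    exact setLIntegral_le_lintegral _ _
  calc t ^ q * μ {z | t < M z} ≤ t ^ q * ∑' j : Tt, μ (T j) :=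
        mul_le_mul_right hμle _
    _ = ∑' j : Tt, t ^ q * μ (T j) := ENNReal.tsum_mul_left.symm
    _ ≤ ∑' j : Tt, (∫⁻ x in T (j : ℕ), f x ^ p ∂μ) ^ (q / p) :=
        ENNReal.tsum_le_tsum fun j => key j j.2
    _ ≤ (∑' j : Tt, ∫⁻ x in T (j : ℕ), f x ^ p ∂μ) ^ (q / p) :=
        tsum_rpow_le_rpow_tsum' _ (by rw [le_div_iff₀ hp0]; linarith)
    _ ≤ (∫⁻ x, f x ^ p ∂μ) ^ (q / p) :=
        ENNReal.rpow_le_rpow hsum1 (by positivity)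
end

section
/- Let (X, μ) be a measure space, T a countable family of measurable subsets of X with finite positive measure, and suppose for every t > 0 the set {M_{T,α} f > t} is a countable union of pairwise disjoint members S of T each satisfying μ(S)^{α−1} ∫_S |f| dμ > t. If 0 < α < 1 and 1/p − 1/q = α with 1 < p < q < ∞, then for any single such disjoint family T_t, one has Σ_{S ∈ T_t} μ(S) · t^q ≤ (∫_X |f|^p dμ)^{q/p}. -/
open MeasureTheory ENNReal


theorem my_tsum_rpow_le {ι : Type*} (a : ι → ℝ≥0∞) {r : ℝ} (hr : 1 ≤ r) :
    ∑' i, a i ^ r ≤ (∑' i, a i) ^ r := by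
  have hr0 : 0 < r := lt_of_lt_of_le one_pos hr
  rw [ENNReal.tsum_eq_iSup_sum]
  refine iSup_le fun s => ?_
  have h1 : ∑ i ∈ s, a i ^ r ≤ (∑ i ∈ s, a i) ^ r := by
    classical
    induction s using Finset.induction with
    | empty => simp [ENNReal.zero_rpow_of_pos hr0]
    | insert _ _ hx ih =>
      rw [Finset.sum_insert hx, Finset.sum_insert hx]
      exact (add_le_add_right ih _).trans (ENNReal.add_rpow_le_rpow_add _ _ hr)
  exact h1.trans (ENNReal.rpow_le_rpow (ENNReal.sum_le_tsum s) hr0.le)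

/-- The core computation in the weak (p,q) bound for the fractional maximal
operator: for a disjoint subfamily `Tt` of tents on which the fractional
average exceeds `t` and whose union is the superlevel set `{M f > t}`, the
sum `Σ_{S ∈ Tt} μ(S) · t^q` is controlled by `(∫ |f|^p dμ)^{q/p}`. -/
theorem fractional_maximal_disjoint_family_bound {X : Type*} [MeasurableSpace X]
    (μ : Measure X)
    (T : ℕ → Set X) (hTm : ∀ j, MeasurableSet (T j))
    (hTpos : ∀ j, 0 < μ (T j)) (hTfin : ∀ j, μ (T j) < ∞)
    (α p q : ℝ) (hα0 : 0 < α) (hα1 : α < 1)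
    (hp : 1 < p) (hpq : p < q) (hpqα : 1 / p - 1 / q = α)
    (f : X → ℝ≥0∞) (hf : Measurable f)
    (M : X → ℝ≥0∞)
    (hM : ∀ z, M z = ⨆ j, (T j).indicator
      (fun _ => μ (T j) ^ (α - 1) * ∫⁻ x in T j, f x ∂μ) z)
    (t : ℝ≥0∞) (ht : 0 < t) (Tt : Set ℕ)
    (hunion : {z | t < M z} = ⋃ j ∈ Tt, T j)
    (hdisj : Tt.Pairwise fun i j => Disjoint (T i) (T j))
    (havg : ∀ j ∈ Tt, t < μ (T j) ^ (α - 1) * ∫⁻ x in T j, f x ∂μ) :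
    ∑' j : Tt, μ (T j) * t ^ q ≤ (∫⁻ x, f x ^ p ∂μ) ^ (q / p) := by
  have hp0 : 0 < p := lt_trans one_pos hp
  have hq0 : 0 < q := lt_trans hp0 hpq
  have hr1 : (1:ℝ) ≤ q / p := (one_le_div hp0).mpr hpq.le
  -- conjugate exponent
  set p' : ℝ := p / (p - 1) with hp'def
  have hconj : p.HolderConjugate p' := Real.HolderConjugate.conjExponent hp
  -- key per-term bound
  have key : ∀ j ∈ Tt, μ (T j) * t ^ q ≤ (∫⁻ x in T j, f x ^ p ∂μ) ^ (q / p) := by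
    intro j hj
    set m := μ (T j) with hm
    have hm0 : m ≠ 0 := (hTpos j).ne'
    have hmtop : m ≠ ⊤ := (hTfin j).ne
    set I := ∫⁻ x in T j, f x ∂μ with hI
    set A := ∫⁻ x in T j, f x ^ p ∂μ with hA
    -- Hölder
    have holder : I ≤ A ^ (1/p) * m ^ (1/p') := by
      have := ENNReal.lintegral_mul_le_Lp_mul_Lq (μ.restrict (T j)) hconj
        hf.aemeasurable (aemeasurable_const (b := (1:ℝ≥0∞)))
      simpa [ENNReal.one_rpow, Measure.restrict_apply_univ] using this
    have ht' : t ^ q ≤ (m ^ (α - 1) * I) ^ q :=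
      ENNReal.rpow_le_rpow (havg j hj).le hq0.le
    have hIq : I ^ q ≤ A ^ (q/p) * m ^ (q/p') := by
      calc I ^ q ≤ (A ^ (1/p) * m ^ (1/p')) ^ q := ENNReal.rpow_le_rpow holder hq0.le
        _ = A ^ (q/p) * m ^ (q/p') := by
            rw [ENNReal.mul_rpow_of_nonneg _ _ hq0.le, ← ENNReal.rpow_mul,
              ← ENNReal.rpow_mul]
            congr 1 <;> ring
    have hα' : α = 1/p - 1/q := hpqα.symm
    have hexp : (1:ℝ) + (α - 1) * q + q/p' = 0 := by
      rw [hα', hp'def]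
      have hp1 : p - 1 ≠ 0 := sub_ne_zero.mpr hp.ne'
      field_simp
      ring
    have hme : m ^ (1:ℝ) * m ^ ((α - 1) * q) * m ^ (q/p') = 1 := by
      rw [← ENNReal.rpow_add _ _ hm0 hmtop, ← ENNReal.rpow_add _ _ hm0 hmtop, hexp,
        ENNReal.rpow_zero]
    calc m * t ^ q ≤ m * (m ^ (α - 1) * I) ^ q := mul_le_mul_right ht' m
      _ = m ^ (1:ℝ) * (m ^ ((α - 1) * q) * I ^ q) := by
          rw [ENNReal.mul_rpow_of_nonneg _ _ hq0.le, ← ENNReal.rpow_mul,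
            ENNReal.rpow_one]
      _ ≤ m ^ (1:ℝ) * (m ^ ((α - 1) * q) * (A ^ (q/p) * m ^ (q/p'))) := by gcongr
      _ = (m ^ (1:ℝ) * m ^ ((α - 1) * q) * m ^ (q/p')) * A ^ (q/p) := by ring
      _ = A ^ (q/p) := by rw [hme, one_mul]
  calc ∑' j : Tt, μ (T j) * t ^ q
      ≤ ∑' j : Tt, (∫⁻ x in T (j:ℕ), f x ^ p ∂μ) ^ (q / p) :=
        ENNReal.tsum_le_tsum fun j => key j j.2
    _ ≤ (∑' j : Tt, ∫⁻ x in T (j:ℕ), f x ^ p ∂μ) ^ (q / p) := my_tsum_rpow_le _ hr1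
    _ ≤ (∫⁻ x, f x ^ p ∂μ) ^ (q / p) := by
        refine ENNReal.rpow_le_rpow ?_ (le_trans zero_le_one hr1)
        have hd : Pairwise (Function.onFun Disjoint fun j : Tt => T j) := by
          intro i k hik
          exact hdisj i.2 k.2 (fun h => hik (Subtype.ext h))
        rw [← lintegral_iUnion (fun j : Tt => hTm j) hd]
        exact lintegral_mono_set (Set.subset_univ _) |>.trans_eq (by rw [Measure.restrict_univ])
end

section
/- Let (X, μ) be a measure space, q ≥ p ≥ 1, N an integer with 1 ≤ N ≤ q, f a measurable function, and {T_j} a countable family of measurable sets with sub-means ⟨g⟩_{T_j} = μ(T_j)^{-1} ∫_{T_j} g dμ. If for a measurable G : X × X → [0,∞) one has the pointwise sparse bound ∫_X |f(w)|^{q−N} G(z,w) dν(w) ≤ Σ_j 1_{T_j}(z) μ(T_j)^{q/p − 1} ⟨|f|^{q−N}⟩_{T_j} for all z, then ∫_X ∫_X |f(w)|^N |f(z)|^{q−N} G(z,w) dν(w) dμ'(z), with dμ'(z) the measure integrating over z restricted to the tents, is bounded by Σ_j μ(T_j)^{q/p} ⟨|f|^N⟩_{T_j} ⟨|f|^{q−N}⟩_{T_j}.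 -/
open MeasureTheory ENNReal

/-- Abstract sparse domination: integrating a pointwise dyadic bound on
`∫ |f(w)|^{q-N} G(z,w) dν(w)` against `|f(z)|^N dμ(z)` produces the symmetric
sparse form `Σ_j μ(T_j)^{q/p} ⟨|f|^N⟩_{T_j} ⟨|f|^{q-N}⟩_{T_j}`. -/
theorem sparse_domination_bilinear {X : Type*} [MeasurableSpace X] (μ ν : Measure X)
    (p q : ℝ) (hp : 1 ≤ p) (hpq : p ≤ q)
    (N : ℕ) (hN : 1 ≤ N) (hNq : (N : ℝ) ≤ q)
    (T : ℕ → Set X) (hTm : ∀ j, MeasurableSet (T j))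
    (hTpos : ∀ j, 0 < μ (T j)) (hTfin : ∀ j, μ (T j) < ∞)
    (f : X → ℝ≥0∞) (hf : Measurable f) (G : X → X → ℝ≥0∞)
    (hpt : ∀ z, (∫⁻ w, f w ^ (q - (N : ℝ)) * G z w ∂ν) ≤
      ∑' j, (T j).indicator (fun _ => μ (T j) ^ (q / p - 1) *
        ((μ (T j))⁻¹ * ∫⁻ x in T j, f x ^ (q - (N : ℝ)) ∂μ)) z) :
    ∫⁻ z, f z ^ (N : ℝ) * ∫⁻ w, f w ^ (q - (N : ℝ)) * G z w ∂ν ∂μ ≤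
      ∑' j, μ (T j) ^ (q / p) *
        ((μ (T j))⁻¹ * ∫⁻ x in T j, f x ^ (N : ℝ) ∂μ) *
        ((μ (T j))⁻¹ * ∫⁻ x in T j, f x ^ (q - (N : ℝ)) ∂μ) := by
  set c : ℕ → ℝ≥0∞ := fun j => μ (T j) ^ (q / p - 1) *
    ((μ (T j))⁻¹ * ∫⁻ x in T j, f x ^ (q - (N : ℝ)) ∂μ) with hc
  calc
    ∫⁻ z, f z ^ (N : ℝ) * ∫⁻ w, f w ^ (q - (N : ℝ)) * G z w ∂ν ∂μ
        ≤ ∫⁻ z, f z ^ (N : ℝ) * ∑' j, (T j).indicator (fun _ => c j) z ∂μ :=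
      lintegral_mono fun z => mul_le_mul_right (hpt z) _
    _ = ∫⁻ z, ∑' j, (T j).indicator (fun z => c j * f z ^ (N : ℝ)) z ∂μ := by
      congr 1; funext z
      rw [← ENNReal.tsum_mul_left]
      congr 1; funext j
      by_cases hz : z ∈ T j <;> simp [hz, mul_comm]
    _ = ∑' j, ∫⁻ z, (T j).indicator (fun z => c j * f z ^ (N : ℝ)) z ∂μ := by
      refine lintegral_tsum fun j => ?_
      exact (Measurable.const_mul (hf.pow_const _) _).indicator (hTm j) |>.aemeasurable
    _ = ∑' j, c j * ∫⁻ z in T j, f z ^ (N : ℝ) ∂μ := by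
      congr 1; funext j
      rw [lintegral_indicator (hTm j), lintegral_const_mul _ (hf.pow_const _)]
    _ = ∑' j, μ (T j) ^ (q / p) *
        ((μ (T j))⁻¹ * ∫⁻ x in T j, f x ^ (N : ℝ) ∂μ) *
        ((μ (T j))⁻¹ * ∫⁻ x in T j, f x ^ (q - (N : ℝ)) ∂μ) := by
      congr 1; funext j
      have h0 : μ (T j) ≠ 0 := (hTpos j).ne'
      have htop : μ (T j) ≠ ∞ := (hTfin j).ne
      have : μ (T j) ^ (q / p - 1) = μ (T j) ^ (q / p) * (μ (T j))⁻¹ := by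
        rw [ENNReal.rpow_sub _ _ h0 htop, ENNReal.rpow_one, ENNReal.div_eq_inv_mul,
          mul_comm]
      simp only [hc]; rw [this]; ring
end

section
/- Let (X, μ) be a measure space, q > 1 an integer exponent with 1 ≤ N < q, and let {T_j} be a countable family of measurable sets of finite positive measure together with pairwise disjoint subsets K_j ⊆ T_j satisfying μ(K_j) ≥ c μ(T_j) for a fixed c > 0. Let M f(z) = sup_{j : z ∈ T_j} ⟨|f|⟩_{T_j} be the maximal operator over the family, and assume M is bounded on L^{q/N}(μ) and on L^{q/(q−N)}(μ). Then Σ_j μ(T_j) ⟨|f|^N⟩_{T_j} ⟨|f|^{q−N}⟩_{T_j} ≤ C ‖f‖_{L^q(μ)}^q for all f ∈ L^q(μ). -/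
open MeasureTheory ENNReal

/-- The sparse form controls the `L^q` norm: given tents `T_j` with pairwise
disjoint kubes `K_j ⊆ T_j` of comparable measure, and a maximal operator `M`
over the tents bounded on `L^{q/N}` and on `L^{q/(q-N)}`, one has
`Σ_j μ(T_j) ⟨|f|^N⟩_{T_j} ⟨|f|^{q-N}⟩_{T_j} ≤ C ‖f‖_{L^q}^q`. -/
theorem sparse_form_controls_Lq {X : Type*} [MeasurableSpace X] (μ : Measure X)
    (q N : ℕ) (hq : 1 < q) (hN : 1 ≤ N) (hNq : N < q)
    (T K : ℕ → Set X) (hTm : ∀ j, MeasurableSet (T j))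
    (hTpos : ∀ j, 0 < μ (T j)) (hTfin : ∀ j, μ (T j) < ∞)
    (hKT : ∀ j, K j ⊆ T j) (hKm : ∀ j, MeasurableSet (K j))
    (hdisj : Pairwise (Function.onFun Disjoint K))
    (c : ℝ≥0∞) (hc : 0 < c) (hlow : ∀ j, c * μ (T j) ≤ μ (K j))
    (M : (X → ℝ≥0∞) → X → ℝ≥0∞)
    (hM : ∀ g z, M g z =
      ⨆ j, (T j).indicator (fun _ => (μ (T j))⁻¹ * ∫⁻ x in T j, g x ∂μ) z)
    (A B : ℝ≥0∞) (hA : A < ∞) (hB : B < ∞)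
    (hM1 : ∀ g : X → ℝ≥0∞, Measurable g →
      ∫⁻ z, M g z ^ ((q : ℝ) / N) ∂μ ≤ A * ∫⁻ z, g z ^ ((q : ℝ) / N) ∂μ)
    (hM2 : ∀ g : X → ℝ≥0∞, Measurable g →
      ∫⁻ z, M g z ^ ((q : ℝ) / ((q : ℝ) - N)) ∂μ ≤
        B * ∫⁻ z, g z ^ ((q : ℝ) / ((q : ℝ) - N)) ∂μ) :
    ∃ C : ℝ≥0∞, C < ∞ ∧ ∀ f : X → ℝ≥0∞, Measurable f →
      ∑' j, μ (T j) * ((μ (T j))⁻¹ * ∫⁻ x in T j, f x ^ (N : ℝ) ∂μ) *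
        ((μ (T j))⁻¹ * ∫⁻ x in T j, f x ^ ((q : ℝ) - N) ∂μ) ≤
      C * ∫⁻ x, f x ^ (q : ℝ) ∂μ := by
  -- exponents
  have hNR : (0:ℝ) < N := by exact_mod_cast hN
  have hqN : (0:ℝ) < (q:ℝ) - N := by
    have : (N:ℝ) < q := by exact_mod_cast hNq
    linarith
  have hqR : (0:ℝ) < q := by positivity
  set p1 : ℝ := (q:ℝ) / N with hp1
  set p2 : ℝ := (q:ℝ) / ((q:ℝ) - N) with hp2
  have hconj : p1.HolderConjugate p2 := by
    rw [Real.holderConjugate_iff]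
    constructor
    · rw [hp1, lt_div_iff₀ hNR]
      have : (N:ℝ) < q := by exact_mod_cast hNq
      linarith
    · rw [hp1, hp2]
      field_simp
      ring
  -- c is finite
  have hcfin : c ≠ ∞ := by
    intro hct
    have h1 := hlow 0
    rw [hct, ENNReal.top_mul (hTpos 0).ne'] at h1
    exact (hTfin 0).ne (top_le_iff.1 (h1.trans (measure_mono (hKT 0))))
  refine ⟨c⁻¹ * (A ^ (1/p1) * B ^ (1/p2)), ?_, ?_⟩
  · refine ENNReal.mul_lt_top ?_ (ENNReal.mul_lt_top ?_ ?_)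
    · exact ENNReal.inv_lt_top.2 hc
    · exact ENNReal.rpow_lt_top_of_nonneg (by positivity) hA.ne
    · exact ENNReal.rpow_lt_top_of_nonneg (by positivity) hB.ne
  intro f hf
  set g1 : X → ℝ≥0∞ := fun x => f x ^ (N:ℝ) with hg1
  set g2 : X → ℝ≥0∞ := fun x => f x ^ ((q:ℝ) - N) with hg2
  have hg1m : Measurable g1 := hf.pow_const _
  have hg2m : Measurable g2 := hf.pow_const _
  set a : ℕ → ℝ≥0∞ := fun j => (μ (T j))⁻¹ * ∫⁻ x in T j, g1 x ∂μ with ha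
  set b : ℕ → ℝ≥0∞ := fun j => (μ (T j))⁻¹ * ∫⁻ x in T j, g2 x ∂μ with hb
  have hMm : ∀ g : X → ℝ≥0∞, Measurable (M g) := by
    intro g
    have : M g = fun z => ⨆ j, (T j).indicator
        (fun _ => (μ (T j))⁻¹ * ∫⁻ x in T j, g x ∂μ) z := funext fun z => hM g z
    rw [this]
    exact Measurable.iSup fun j => measurable_const.indicator (hTm j)
  -- pointwise lower bound on K j
  have hpt : ∀ j z, z ∈ K j → a j * b j ≤ M g1 z * M g2 z := by
    intro j z hz
    have hzT : z ∈ T j := hKT j hz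
    have h1 : a j ≤ M g1 z := by
      rw [hM g1 z]
      refine le_trans ?_ (le_iSup _ j)
      rw [Set.indicator_of_mem hzT]
    have h2 : b j ≤ M g2 z := by
      rw [hM g2 z]
      refine le_trans ?_ (le_iSup _ j)
      rw [Set.indicator_of_mem hzT]
    exact mul_le_mul' h1 h2
  -- each term bounded by c⁻¹ ∫_{K j} Mg1 Mg2
  have hterm : ∀ j, μ (T j) * a j * b j ≤ c⁻¹ * ∫⁻ z in K j, M g1 z * M g2 z ∂μ := by
    intro j
    have h1 : μ (K j) * (a j * b j) ≤ ∫⁻ z in K j, M g1 z * M g2 z ∂μ := by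
      rw [mul_comm]
      calc a j * b j * μ (K j) = ∫⁻ _ in K j, a j * b j ∂μ := by
            rw [setLIntegral_const]
        _ ≤ ∫⁻ z in K j, M g1 z * M g2 z ∂μ := by
            refine setLIntegral_mono ((hMm g1).mul (hMm g2)) fun z hz => hpt j z hz
    have h2 : μ (T j) ≤ c⁻¹ * μ (K j) := by
      rw [← ENNReal.div_eq_inv_mul, ENNReal.le_div_iff_mul_le (Or.inl hc.ne') (Or.inl hcfin),
        mul_comm]
      exact hlow j
    calc μ (T j) * a j * b j = μ (T j) * (a j * b j) := by ring
      _ ≤ c⁻¹ * μ (K j) * (a j * b j) := mul_le_mul_left h2 _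
      _ = c⁻¹ * (μ (K j) * (a j * b j)) := by ring
      _ ≤ c⁻¹ * ∫⁻ z in K j, M g1 z * M g2 z ∂μ := mul_le_mul_right h1 _
  -- sum up using disjointness
  have hsum : ∑' j, μ (T j) * a j * b j ≤ c⁻¹ * ∫⁻ z, M g1 z * M g2 z ∂μ := by
    calc ∑' j, μ (T j) * a j * b j
        ≤ ∑' j, c⁻¹ * ∫⁻ z in K j, M g1 z * M g2 z ∂μ := ENNReal.tsum_le_tsum hterm
      _ = c⁻¹ * ∑' j, ∫⁻ z in K j, M g1 z * M g2 z ∂μ := ENNReal.tsum_mul_left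
      _ = c⁻¹ * ∫⁻ z in ⋃ j, K j, M g1 z * M g2 z ∂μ := by
          rw [lintegral_iUnion hKm hdisj]
      _ ≤ c⁻¹ * ∫⁻ z, M g1 z * M g2 z ∂μ := by
          exact mul_le_mul_right (lintegral_mono' Measure.restrict_le_self le_rfl) _
  -- Hölder + boundedness
  set I : ℝ≥0∞ := ∫⁻ x, f x ^ (q:ℝ) ∂μ with hI
  have hIg1 : ∫⁻ z, g1 z ^ p1 ∂μ = I := by
    refine lintegral_congr fun z => ?_
    rw [hg1, ← ENNReal.rpow_mul]
    congr 1
    rw [hp1]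
    field_simp
  have hIg2 : ∫⁻ z, g2 z ^ p2 ∂μ = I := by
    refine lintegral_congr fun z => ?_
    rw [hg2, ← ENNReal.rpow_mul]
    congr 1
    rw [hp2, mul_div_cancel₀ _ hqN.ne']
  have hHolder : ∫⁻ z, M g1 z * M g2 z ∂μ ≤ A ^ (1/p1) * B ^ (1/p2) * I := by
    calc ∫⁻ z, M g1 z * M g2 z ∂μ
        ≤ (∫⁻ z, M g1 z ^ p1 ∂μ) ^ (1/p1) * (∫⁻ z, M g2 z ^ p2 ∂μ) ^ (1/p2) :=
          ENNReal.lintegral_mul_le_Lp_mul_Lq μ hconj (hMm g1).aemeasurable (hMm g2).aemeasurable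
      _ ≤ (A * ∫⁻ z, g1 z ^ p1 ∂μ) ^ (1/p1) * (B * ∫⁻ z, g2 z ^ p2 ∂μ) ^ (1/p2) := by
          gcongr
          · exact hM1 g1 hg1m
          · exact hM2 g2 hg2m
      _ = (A * I) ^ (1/p1) * (B * I) ^ (1/p2) := by rw [hIg1, hIg2]
      _ = A ^ (1/p1) * I ^ (1/p1) * (B ^ (1/p2) * I ^ (1/p2)) := by
          rw [ENNReal.mul_rpow_of_nonneg _ _ (by positivity),
            ENNReal.mul_rpow_of_nonneg _ _ (by positivity)]
      _ = A ^ (1/p1) * B ^ (1/p2) * (I ^ (1/p1) * I ^ (1/p2)) := by ring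
      _ = A ^ (1/p1) * B ^ (1/p2) * I := by
          rw [← ENNReal.rpow_add_of_nonneg _ _ (by positivity) (by positivity),
            one_div, one_div, hconj.inv_add_inv_eq_one, ENNReal.rpow_one]
  calc ∑' j, μ (T j) * a j * b j ≤ c⁻¹ * ∫⁻ z, M g1 z * M g2 z ∂μ := hsum
    _ ≤ c⁻¹ * (A ^ (1/p1) * B ^ (1/p2) * I) := mul_le_mul_right hHolder _
    _ = c⁻¹ * (A ^ (1/p1) * B ^ (1/p2)) * I := by ring
end

section
/- Let (X, μ) be a measure space, q ≥ p ≥ 1, and let {(T_j, E_j, K_j)} be a countable family where K_j ⊆ T_j are pairwise disjoint, and E_j are measurable with bounded overlap (Σ_j 1_{E_j} ≤ C₀ pointwise). Suppose ν is a measure with ν(K_j) ≤ C₁ μ(K_j)^{q/p} for all j (a Carleson-type condition), and suppose a nonnegative function f satisfies the sub-mean value property f(z)^{q−N} ≤ C₂ μ(K_j)^{−1} ∫_{E_j} f^{q−N} dμ for all z ∈ K_j. Then for each j, ∫_{T_j} f^{q−N} dν ≤ C₁C₂ Σ_{K_i ⊆ T_j} μ(K_i)^{q/p − 1} ∫_{E_i}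 f^{q−N} dμ ≤ C₁C₂ (sup_{K_i ⊆ T_j} μ(K_i)^{q/p − 1}) · C₀ ∫_{⋃_{K_i ⊆ T_j} E_i} f^{q−N} dμ. -/
open MeasureTheory ENNReal

/-- Key step in the pointwise sparse bound: decomposing a tent into its
descendant kubes, the sub-mean value property on each kube, the dyadic
Carleson condition `ν(K_i) ≤ C₁ μ(K_i)^{q/p}`, and the bounded overlap of the
enlarged balls `E_i` give
`∫_{T_j} f^{q-N} dν ≤ C₁C₂ Σ_{K_i ⊆ T_j} μ(K_i)^{q/p-1} ∫_{E_i} f^{q-N} dμ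
  ≤ C₁C₂ C₀ (sup_{K_i ⊆ T_j} μ(K_i)^{q/p-1}) ∫_{⋃ E_i} f^{q-N} dμ`. -/
theorem tent_decomposition_bound {X : Type*} [MeasurableSpace X] (μ ν : Measure X)
    (p q : ℝ) (hp : 1 ≤ p) (hpq : p ≤ q)
    (N : ℕ) (hN : 1 ≤ N) (hNq : (N : ℝ) ≤ q)
    (T E K : ℕ → Set X)
    (hTm : ∀ j, MeasurableSet (T j)) (hEm : ∀ j, MeasurableSet (E j))
    (hKm : ∀ j, MeasurableSet (K j))
    (hKT : ∀ j, K j ⊆ T j)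
    (hdisj : Pairwise (Function.onFun Disjoint K))
    (hcover : ∀ j, T j ⊆ ⋃ i ∈ {i | K i ⊆ T j}, K i)
    (hμKpos : ∀ j, 0 < μ (K j)) (hμKfin : ∀ j, μ (K j) < ∞)
    (C₀ C₁ C₂ : ℝ≥0∞)
    (hoverlap : ∀ x, ∑' j, (E j).indicator (fun _ => (1 : ℝ≥0∞)) x ≤ C₀)
    (hCarleson : ∀ j, ν (K j) ≤ C₁ * μ (K j) ^ (q / p))
    (f : X → ℝ≥0∞) (hf : Measurable f)
    (hsubmean : ∀ j, ∀ z ∈ K j,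
      f z ^ (q - (N : ℝ)) ≤ C₂ * (μ (K j))⁻¹ * ∫⁻ x in E j, f x ^ (q - (N : ℝ)) ∂μ) :
    ∀ j₀,
      (∫⁻ x in T j₀, f x ^ (q - (N : ℝ)) ∂ν ≤
        C₁ * C₂ * ∑' i : {i | K i ⊆ T j₀},
          μ (K i) ^ (q / p - 1) * ∫⁻ x in E i, f x ^ (q - (N : ℝ)) ∂μ) ∧
      (C₁ * C₂ * ∑' i : {i | K i ⊆ T j₀},
          μ (K i) ^ (q / p - 1) * ∫⁻ x in E i, f x ^ (q - (N : ℝ)) ∂μ ≤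
        C₁ * C₂ * C₀ * (⨆ i : {i | K i ⊆ T j₀}, μ (K i) ^ (q / p - 1)) *
          ∫⁻ x in ⋃ i ∈ {i | K i ⊆ T j₀}, E i, f x ^ (q - (N : ℝ)) ∂μ) := by
  intro j₀
  set r := q - (N : ℝ) with hr
  set g : X → ℝ≥0∞ := fun x => f x ^ r with hg
  have hgm : Measurable g := hf.pow_const r
  set S := {i | K i ⊆ T j₀} with hS
  set U := ⋃ i ∈ S, E i with hU
  have hUm : MeasurableSet U := MeasurableSet.biUnion (Set.to_countable _) fun i _ => hEm i
  -- per-kube bound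
  have hterm : ∀ i : S, ∫⁻ x in K i, g x ∂ν ≤
      C₁ * C₂ * (μ (K i) ^ (q / p - 1) * ∫⁻ x in E i, g x ∂μ) := by
    intro i
    have h1 : ∫⁻ x in K i, g x ∂ν ≤
        ∫⁻ _ in K (i : ℕ), (C₂ * (μ (K i))⁻¹ * ∫⁻ x in E i, g x ∂μ) ∂ν :=
      setLIntegral_mono measurable_const fun z hz => hsubmean i z hz
    rw [setLIntegral_const] at h1
    have hμ : μ (K i) ^ (q / p) * (μ (K i))⁻¹ = μ (K i) ^ (q / p - 1) := by
      rw [← ENNReal.rpow_neg_one (μ (K (i:ℕ))),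
        ← ENNReal.rpow_add _ _ (hμKpos i).ne' (hμKfin i).ne]
      norm_num [sub_eq_add_neg]
    calc ∫⁻ x in K i, g x ∂ν
        ≤ (C₂ * (μ (K i))⁻¹ * ∫⁻ x in E i, g x ∂μ) * ν (K i) := h1
      _ ≤ (C₂ * (μ (K i))⁻¹ * ∫⁻ x in E i, g x ∂μ) * (C₁ * μ (K i) ^ (q / p)) :=
          mul_le_mul_right (hCarleson i) _
      _ = C₁ * C₂ * ((μ (K i) ^ (q / p) * (μ (K i))⁻¹) * ∫⁻ x in E i, g x ∂μ) := by ring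
      _ = C₁ * C₂ * (μ (K i) ^ (q / p - 1) * ∫⁻ x in E i, g x ∂μ) := by rw [hμ]
  -- first inequality
  have part1 : ∫⁻ x in T j₀, g x ∂ν ≤
      C₁ * C₂ * ∑' i : S, μ (K i) ^ (q / p - 1) * ∫⁻ x in E i, g x ∂μ := by
    calc ∫⁻ x in T j₀, g x ∂ν
        ≤ ∫⁻ x in ⋃ i : S, K i, g x ∂ν := by
          refine lintegral_mono_set ?_
          have hc := hcover j₀
          rwa [Set.biUnion_eq_iUnion] at hc
      _ ≤ ∑' i : S, ∫⁻ x in K i, g x ∂ν := lintegral_iUnion_le _ _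
      _ ≤ ∑' i : S, C₁ * C₂ * (μ (K i) ^ (q / p - 1) * ∫⁻ x in E i, g x ∂μ) :=
          ENNReal.tsum_le_tsum hterm
      _ = C₁ * C₂ * ∑' i : S, μ (K i) ^ (q / p - 1) * ∫⁻ x in E i, g x ∂μ :=
          ENNReal.tsum_mul_left
  -- second inequality
  have h2a : (∑' i : S, μ (K i) ^ (q / p - 1) * ∫⁻ x in E i, g x ∂μ) ≤
      (⨆ i : S, μ (K i) ^ (q / p - 1)) * ∑' i : S, ∫⁻ x in E i, g x ∂μ := by
    rw [← ENNReal.tsum_mul_left]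
    exact ENNReal.tsum_le_tsum fun i =>
      mul_le_mul_left (le_iSup (fun i : S => μ (K i) ^ (q / p - 1)) i) _
  have h2b : (∑' i : S, ∫⁻ x in E i, g x ∂μ) ≤ C₀ * ∫⁻ x in U, g x ∂μ := by
    calc (∑' i : S, ∫⁻ x in E i, g x ∂μ)
        = ∑' i : S, ∫⁻ x, (E i).indicator g x ∂μ := by
          simp_rw [lintegral_indicator (hEm _) g]
      _ = ∫⁻ x, ∑' i : S, (E i).indicator g x ∂μ :=
          (lintegral_tsum fun i : S => (hgm.indicator (hEm i)).aemeasurable).symm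
      _ ≤ ∫⁻ x, C₀ * U.indicator g x ∂μ := by
          refine lintegral_mono fun x => ?_
          by_cases hx : x ∈ U
          · rw [Set.indicator_of_mem hx]
            have e1 : ∀ i : S, (E (i : ℕ)).indicator g x =
                (E (i : ℕ)).indicator (fun _ => (1 : ℝ≥0∞)) x * g x := by
              intro i
              by_cases h : x ∈ E (i : ℕ) <;> simp [Set.indicator, h]
            calc (∑' i : S, (E (i : ℕ)).indicator g x)
                = (∑' i : S, (E (i : ℕ)).indicator (fun _ => (1 : ℝ≥0∞)) x) * g x := by
                  simp_rw [e1]; exact ENNReal.tsum_mul_right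
              _ ≤ C₀ * g x := by
                  refine mul_le_mul_left (le_trans ?_ (hoverlap x)) _
                  exact ENNReal.tsum_comp_le_tsum_of_injective Subtype.val_injective _
          · have e0 : ∀ i : S, (E (i : ℕ)).indicator g x = 0 := by
              intro i
              have : x ∉ E (i : ℕ) := fun h => hx (Set.mem_biUnion i.2 h)
              simp [Set.indicator_of_notMem this]
            simp [e0]
      _ = C₀ * ∫⁻ x in U, g x ∂μ := by
          rw [lintegral_const_mul _ (hgm.indicator hUm), lintegral_indicator hUm g]
  have part2 : C₁ * C₂ * ∑' i : S, μ (K i) ^ (q / p - 1) * ∫⁻ x in E i, g x ∂μ ≤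
      C₁ * C₂ * C₀ * (⨆ i : S, μ (K i) ^ (q / p - 1)) * ∫⁻ x in U, g x ∂μ := by
    calc C₁ * C₂ * ∑' i : S, μ (K i) ^ (q / p - 1) * ∫⁻ x in E i, g x ∂μ
        ≤ C₁ * C₂ * ((⨆ i : S, μ (K i) ^ (q / p - 1)) * ∑' i : S, ∫⁻ x in E i, g x ∂μ) :=
          mul_le_mul_right h2a _
      _ ≤ C₁ * C₂ * ((⨆ i : S, μ (K i) ^ (q / p - 1)) * (C₀ * ∫⁻ x in U, g x ∂μ)) :=
          mul_le_mul_right (mul_le_mul_right h2b _) _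
      _ = C₁ * C₂ * C₀ * (⨆ i : S, μ (K i) ^ (q / p - 1)) * ∫⁻ x in U, g x ∂μ := by ring
  exact ⟨part1, part2⟩
end
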